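/- arXiv:2308.11259 — 4 statements merged into one kernel-verified Lean document; each statement's English description precedes it below -/
import Mathlib

section
/- In oriented bond percolation on Z^2, define a vertex to be occupied if there is an open oriented path from the origin to it, and define an edge to be good if it is open, starts from an occupied vertex (x,y), and either is vertical, or is horizontal (to (x+1,y)) and there is no open oriented path from the origin to (x+1,y) passing through (x+1,y-1). Then a vertex v is occupied if and only if there is a path of good edges from the origin to v. -/
/-- A percolation configuration: the status (open = `true`) of each oriented edge of
`ℤ²`, an edge being encoded as its starting vertex together with a direction
(`false` = horizontal, to `(x+1,y)`; `true` = vertical, to `(x,y+1)`). -/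
abbrev Config := (ℤ × ℤ) × Bool → Bool

/-- One open oriented step. -/
def OpenStep (ω : Config) (u v : ℤ × ℤ) : Prop :=
  (ω (u, false) = true ∧ v = u + (1, 0)) ∨ (ω (u, true) = true ∧ v = u + (0, 1))

/-- A vertex is occupied if it is reachable from the origin by an open oriented path. -/
def Occupied (ω : Config) (v : ℤ × ℤ) : Prop :=
  Relation.ReflTransGen (OpenStep ω) (0, 0) v

/-- The edge from `u` in direction `d` is good: it is open, starts from an occupied
vertex, and either is vertical, or is horizontal and there is no open path from the
origin to `u + (1,0)` passing through `u + (1,-1)`. -/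
def GoodEdge (ω : Config) (u : ℤ × ℤ) (d : Bool) : Prop :=
  ω (u, d) = true ∧ Occupied ω u ∧
    (d = true ∨ ¬ (Occupied ω (u + (1, -1)) ∧ ω (u + (1, -1), true) = true))

/-- One step along a good edge. -/
def GoodStep (ω : Config) (u v : ℤ × ℤ) : Prop :=
  (GoodEdge ω u false ∧ v = u + (1, 0)) ∨ (GoodEdge ω u true ∧ v = u + (0, 1))

lemma occ_sum_nonneg (ω : Config) (v : ℤ × ℤ) (h : Occupied ω v) : 0 ≤ v.1 + v.2 := by
  induction h with
  | refl => simp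
  | tail h1 h2 ih =>
    rcases h2 with ⟨_, rfl⟩ | ⟨_, rfl⟩ <;> simp [Prod.add_def] <;> omega

lemma key (ω : Config) : ∀ n : ℕ, ∀ v : ℤ × ℤ, Occupied ω v → v.1 + v.2 ≤ n →
    Relation.ReflTransGen (GoodStep ω) (0, 0) v := by
  intro n
  induction n with
  | zero =>
    intro v hv hs
    cases hv with
    | refl => exact .refl
    | @tail u _ hu hstep =>
      have h0 := occ_sum_nonneg ω u hu
      rcases hstep with ⟨_, rfl⟩ | ⟨_, rfl⟩ <;> simp [Prod.add_def] at hs <;> omega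
  | succ n ih =>
    intro v hv hs
    cases hv with
    | refl => exact .refl
    | @tail u _ hu hstep =>
      rcases hstep with ⟨hop, rfl⟩ | ⟨hop, rfl⟩
      · -- horizontal step
        have hsu : u.1 + u.2 ≤ n := by
          simp [Prod.add_def] at hs; omega
        by_cases hbad : Occupied ω (u + (1, -1)) ∧ ω (u + (1, -1), true) = true
        · have hw := ih (u + (1, -1)) hbad.1 (by simp [Prod.add_def]; omega)
          refine hw.tail (Or.inr ⟨⟨hbad.2, hbad.1, Or.inl rfl⟩, ?_⟩)
          simp [Prod.ext_iff, Prod.add_def]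
        · exact (ih u hu hsu).tail (Or.inl ⟨⟨hop, hu, Or.inr hbad⟩, rfl⟩)
      · -- vertical step
        have hsu : u.1 + u.2 ≤ n := by
          simp [Prod.add_def] at hs; omega
        exact (ih u hu hsu).tail (Or.inr ⟨⟨hop, hu, Or.inl rfl⟩, rfl⟩)

/-- A vertex is occupied iff there is a path of good edges from the origin to it. -/
theorem stmt_3 (ω : Config) (v : ℤ × ℤ) :
    Occupied ω v ↔ Relation.ReflTransGen (GoodStep ω) (0, 0) v := by
  constructor
  · intro h
    exact key ω (v.1 + v.2).toNat v h (Int.self_le_toNat _)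
  · intro h
    induction h with
    | refl => exact .refl
    | tail h1 h2 ih =>
      refine ih.tail ?_
      rcases h2 with ⟨hg, rfl⟩ | ⟨hg, rfl⟩
      · exact Or.inl ⟨hg.1, rfl⟩
      · exact Or.inr ⟨hg.1, rfl⟩
end

section
/- In oriented bond percolation on Z^2 with good edges defined as in the paper, for every occupied vertex v there is exactly one path of good edges from the origin to v. -/
lemma occ_nonneg {ω : Config} {v : ℤ × ℤ} (h : Occupied ω v) : 0 ≤ v.1 ∧ 0 ≤ v.2 := by
  induction h with
  | refl => simp
  | tail _ hstep ih =>
    obtain ⟨h1, h2⟩ := ih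
    rcases hstep with ⟨_, rfl⟩ | ⟨_, rfl⟩ <;>
      simp only [Prod.fst_add, Prod.snd_add] <;> constructor <;> omega

lemma goodstep_inj {ω : Config} {u₁ u₂ v : ℤ × ℤ}
    (h₁ : GoodStep ω u₁ v) (h₂ : GoodStep ω u₂ v) : u₁ = u₂ := by
  rcases h₁ with ⟨g₁, e₁⟩ | ⟨g₁, e₁⟩ <;> rcases h₂ with ⟨g₂, e₂⟩ | ⟨g₂, e₂⟩
  · exact add_right_cancel (e₁.symm.trans e₂)
  · -- u₁ horizontal good, u₂ vertical good : contradiction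
    exfalso
    rcases g₁.2.2 with hd | hne
    · exact Bool.false_ne_true hd
    · have key : u₁ + (1, -1) = u₂ := by
        have := e₁.symm.trans e₂
        rw [Prod.ext_iff] at this ⊢
        simp only [Prod.fst_add, Prod.snd_add] at this ⊢
        omega
      rw [key] at hne
      exact hne ⟨g₂.2.1, g₂.1⟩
  · exfalso
    rcases g₂.2.2 with hd | hne
    · exact Bool.false_ne_true hd
    · have key : u₂ + (1, -1) = u₁ := by
        have := e₂.symm.trans e₁
        rw [Prod.ext_iff] at this ⊢
        simp only [Prod.fst_add, Prod.snd_add] at this ⊢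
        omega
      rw [key] at hne
      exact hne ⟨g₁.2.1, g₁.1⟩
  · exact add_right_cancel (e₁.symm.trans e₂)

lemma no_goodstep_zero {ω : Config} {u : ℤ × ℤ} (h : GoodStep ω u (0, 0)) : False := by
  rcases h with ⟨g, e⟩ | ⟨g, e⟩ <;>
  · obtain ⟨h1, h2⟩ := occ_nonneg g.2.1
    rw [Prod.ext_iff] at e
    simp only [Prod.fst_add, Prod.snd_add] at e
    omega

lemma exists_goodstep {ω : Config} {v : ℤ × ℤ} (h : Occupied ω v) (hv : v ≠ (0, 0)) :
    ∃ u, GoodStep ω u v := by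
  rcases h.cases_tail with h0 | ⟨c, hc, hcv⟩
  · exact absurd h0 hv
  by_cases hVA : Occupied ω (v + (0, -1)) ∧ ω (v + (0, -1), true) = true
  · refine ⟨v + (0, -1), Or.inr ⟨⟨hVA.2, hVA.1, Or.inl rfl⟩, ?_⟩⟩
    rw [Prod.ext_iff]
    simp only [Prod.fst_add, Prod.snd_add]
    omega
  · rcases hcv with ⟨ho, he⟩ | ⟨ho, he⟩
    · have hkey : c + (1, -1) = v + (0, -1) := by
        rw [Prod.ext_iff] at he ⊢
        simp only [Prod.fst_add, Prod.snd_add] at he ⊢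
        omega
      exact ⟨c, Or.inl ⟨⟨ho, hc, Or.inr (by rw [hkey]; exact hVA)⟩, he⟩⟩
    · exfalso
      have hkey : c = v + (0, -1) := by
        rw [Prod.ext_iff] at he ⊢
        simp only [Prod.fst_add, Prod.snd_add] at he ⊢
        omega
      rw [hkey] at hc ho
      exact hVA ⟨hc, ho⟩

lemma exists_list {ω : Config} : ∀ (n : ℕ) (v : ℤ × ℤ), Occupied ω v →
    (v.1 + v.2).toNat ≤ n →
    ∃ l : List (ℤ × ℤ), l.head? = some (0, 0) ∧ l.getLast? = some v ∧
      l.Chain' (GoodStep ω) := by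
  intro n
  induction n with
  | zero =>
    intro v hv hle
    obtain ⟨h1, h2⟩ := occ_nonneg hv
    have : v = (0, 0) := by rw [Prod.ext_iff]; omega
    subst this
    exact ⟨[(0, 0)], by simp, by simp, List.isChain_singleton _⟩
  | succ n ih =>
    intro v hv hle
    by_cases h0 : v = (0, 0)
    · subst h0; exact ⟨[(0, 0)], by simp, by simp, List.isChain_singleton _⟩
    · obtain ⟨u, hu⟩ := exists_goodstep hv h0
      have hocc : Occupied ω u := by
        rcases hu with ⟨g, _⟩ | ⟨g, _⟩ <;> exact g.2.1
      have hsum : (u.1 + u.2).toNat ≤ n := by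
        obtain ⟨h1, h2⟩ := occ_nonneg hocc
        rcases hu with ⟨_, rfl⟩ | ⟨_, rfl⟩ <;>
          simp only [Prod.fst_add, Prod.snd_add] at hle <;> omega
      obtain ⟨l, hh, hl, hch⟩ := ih u hocc hsum
      refine ⟨l ++ [v], ?_, ?_, ?_⟩
      · rcases l with _ | ⟨a, t⟩
        · simp at hh
        · simpa using hh
      · exact List.getLast?_concat (l := l)
      · unfold List.Chain'; rw [List.isChain_append]
        refine ⟨hch, by simp, ?_⟩
        intro x hx y hy
        rw [hl] at hx
        simp only [Option.mem_def, Option.some.injEq] at hx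
        simp only [List.head?_cons, Option.mem_def, Option.some.injEq] at hy
        subst hx; subst hy
        exact hu

lemma uniq_list {ω : Config} : ∀ (n : ℕ) (l₁ l₂ : List (ℤ × ℤ)) (v : ℤ × ℤ),
    l₁.length ≤ n →
    l₁.head? = some (0, 0) → l₁.getLast? = some v → l₁.Chain' (GoodStep ω) →
    l₂.head? = some (0, 0) → l₂.getLast? = some v → l₂.Chain' (GoodStep ω) →
    l₁ = l₂ := by
  intro n
  induction n with
  | zero =>
    intro l₁ l₂ v hlen h1h _ _ _ _ _
    rw [List.length_eq_zero_iff.mp (Nat.le_zero.mp hlen)] at h1h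
    simp at h1h
  | succ n ih =>
    intro l₁ l₂ v hlen h1h h1l h1c h2h h2l h2c
    rcases l₁.eq_nil_or_concat with rfl | ⟨m₁, v₁, rfl⟩
    · simp at h1h
    rcases l₂.eq_nil_or_concat with rfl | ⟨m₂, v₂, rfl⟩
    · simp at h2h
    rw [List.concat_eq_append] at *
    have hv₁ : v₁ = v := by
      have := (List.getLast?_concat (l := m₁)).symm.trans h1l
      simpa using this
    have hv₂ : v₂ = v := by
      have := (List.getLast?_concat (l := m₂)).symm.trans h2l
      simpa using this
    subst hv₁; subst hv₂
    obtain ⟨c1, _, c3⟩ := List.isChain_append.mp h1c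
    obtain ⟨d1, _, d3⟩ := List.isChain_append.mp h2c
    rcases eq_or_ne m₁ ([] : List (ℤ × ℤ)) with rfl | hm₁ <;>
      rcases eq_or_ne m₂ ([] : List (ℤ × ℤ)) with rfl | hm₂
    · rfl
    · -- l₁ = [v], so v = (0,0); but m₂ nonempty gives a good step into (0,0)
      exfalso
      have hv0 : v₂ = (0, 0) := by simpa using h1h
      subst hv0
      have := d3 (m₂.getLast hm₂) (by rw [List.getLast?_eq_getLast hm₂]; rfl)
        (0, 0) (by simp)
      exact no_goodstep_zero this
    · exfalso
      have hv0 : v₂ = (0, 0) := by simpa using h2h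
      subst hv0
      have := c3 (m₁.getLast hm₁) (by rw [List.getLast?_eq_getLast hm₁]; rfl)
        (0, 0) (by simp)
      exact no_goodstep_zero this
    · have hs₁ := c3 _ (by rw [List.getLast?_eq_getLast hm₁]; rfl) v₂ (by simp)
      have hs₂ := d3 _ (by rw [List.getLast?_eq_getLast hm₂]; rfl) v₂ (by simp)
      have hu : m₁.getLast hm₁ = m₂.getLast hm₂ := goodstep_inj hs₁ hs₂
      have hh₁ : m₁.head? = some (0, 0) := by
        rcases m₁ with _ | ⟨a, t⟩
        · exact absurd rfl hm₁
        · simpa using h1h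
      have hh₂ : m₂.head? = some (0, 0) := by
        rcases m₂ with _ | ⟨a, t⟩
        · exact absurd rfl hm₂
        · simpa using h2h
      have hlen' : m₁.length ≤ n := by
        simp only [List.length_append, List.length_cons, List.length_nil] at hlen
        omega
      have : m₁ = m₂ := ih m₁ m₂ (m₁.getLast hm₁) hlen' hh₁
        (List.getLast?_eq_getLast hm₁) c1 hh₂
        (by rw [List.getLast?_eq_getLast hm₂, hu]) d1
      rw [this]
      simp

/-- For every occupied vertex there is exactly one path of good edges from the origin
to it (a path being recorded as its list of visited vertices). -/
theorem stmt_4 (ω : Config) (v : ℤ × ℤ) (h : Occupied ω v) :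
    ∃! l : List (ℤ × ℤ),
      l.head? = some (0, 0) ∧ l.getLast? = some v ∧ l.Chain' (GoodStep ω) := by
  obtain ⟨l, hh, hl, hc⟩ := exists_list (v.1 + v.2).toNat v h le_rfl
  refine ⟨l, ⟨hh, hl, hc⟩, ?_⟩
  intro l' ⟨h'h, h'l, h'c⟩
  exact uniq_list l'.length l' l v le_rfl h'h h'l h'c hh hl hc
end

section
/- In oriented bond percolation on Z^3 with good edges defined by the priority order e_3 > e_2 > e_1, every occupied vertex is reached from the origin by exactly one path of good edges. -/
/-- A configuration of the oriented bond percolation on `ℤ³`: the status of each edge,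
an edge being encoded by its starting vertex and its direction `i : Fin 3`
(index `0` for `e₁`, `1` for `e₂`, `2` for `e₃`). -/
abbrev Config3 := (Fin 3 → ℤ) × Fin 3 → Bool

def OpenStep3 (ω : Config3) (u v : Fin 3 → ℤ) : Prop :=
  ∃ i : Fin 3, ω (u, i) = true ∧ v = u + Pi.single i 1

def Occupied3 (ω : Config3) (v : Fin 3 → ℤ) : Prop :=
  Relation.ReflTransGen (OpenStep3 ω) 0 v

/-- Good edges in `ℤ³`, with the priority order `e₃ > e₂ > e₁`. -/
def GoodEdge3 (ω : Config3) (u : Fin 3 → ℤ) (i : Fin 3) : Prop :=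
  ω (u, i) = true ∧ Occupied3 ω u ∧
    (i = 2 ∨
     (i = 1 ∧ ¬ (Occupied3 ω (u + Pi.single 1 1 - Pi.single 2 1) ∧
        ω (u + Pi.single 1 1 - Pi.single 2 1, 2) = true)) ∨
     (i = 0 ∧ ¬ ((Occupied3 ω (u + Pi.single 0 1 - Pi.single 2 1) ∧
          ω (u + Pi.single 0 1 - Pi.single 2 1, 2) = true) ∨
        (Occupied3 ω (u + Pi.single 0 1 - Pi.single 1 1) ∧
          ω (u + Pi.single 0 1 - Pi.single 1 1, 1) = true))))

def GoodStep3 (ω : Config3) (u v : Fin 3 → ℤ) : Prop :=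
  ∃ i : Fin 3, GoodEdge3 ω u i ∧ v = u + Pi.single i 1

private def S3 (v : Fin 3 → ℤ) : ℤ := v 0 + v 1 + v 2

private lemma S3_add_single (u : Fin 3 → ℤ) (i : Fin 3) :
    S3 (u + Pi.single i 1) = S3 u + 1 := by
  fin_cases i <;> simp [S3, Pi.single_apply] <;> ring

private lemma occupied_S3_nonneg {ω : Config3} {v : Fin 3 → ℤ} (h : Occupied3 ω v) :
    0 ≤ S3 v := by
  induction h with
  | refl => simp [S3]
  | tail _ hstep ih =>
    obtain ⟨i, -, rfl⟩ := hstep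
    rw [S3_add_single]; omega

private lemma pred_exists {ω : Config3} {v : Fin 3 → ℤ} (hv : Occupied3 ω v)
    (h0 : v ≠ 0) : ∃ u, GoodStep3 ω u v := by
  have hP : ∃ i : Fin 3, Occupied3 ω (v - Pi.single i 1) ∧
      ω (v - Pi.single i 1, i) = true := by
    rcases hv.cases_tail with h | ⟨b, hb, hstep⟩
    · exact absurd h h0
    · obtain ⟨i, hωi, rfl⟩ := hstep
      have e : b + Pi.single i 1 - Pi.single i 1 = b := by abel
      exact ⟨i, by rw [e]; exact hb, by rw [e]; exact hωi⟩
  by_cases h2 : Occupied3 ω (v - Pi.single 2 1) ∧ ω (v - Pi.single 2 1, 2) = true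
  · exact ⟨v - Pi.single 2 1, 2, ⟨h2.2, h2.1, Or.inl rfl⟩, by abel⟩
  by_cases h1 : Occupied3 ω (v - Pi.single 1 1) ∧ ω (v - Pi.single 1 1, 1) = true
  · refine ⟨v - Pi.single 1 1, 1, ⟨h1.2, h1.1, Or.inr (Or.inl ⟨rfl, ?_⟩)⟩, by abel⟩
    have e : v - Pi.single 1 1 + Pi.single 1 1 - Pi.single 2 1 = v - Pi.single 2 1 := by abel
    rw [e]; exact h2
  obtain ⟨i, hocc, hω⟩ := hP
  have hi : i = 0 := by
    fin_cases i
    · rfl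
    · exact absurd ⟨hocc, hω⟩ h1
    · exact absurd ⟨hocc, hω⟩ h2
  subst hi
  refine ⟨v - Pi.single 0 1, 0, ⟨hω, hocc, Or.inr (Or.inr ⟨rfl, ?_⟩)⟩, by abel⟩
  have e2 : v - Pi.single 0 1 + Pi.single 0 1 - Pi.single 2 1 = v - Pi.single 2 1 := by abel
  have e1 : v - Pi.single 0 1 + Pi.single 0 1 - Pi.single 1 1 = v - Pi.single 1 1 := by abel
  rw [e2, e1]
  rintro (h | h)
  · exact h2 h
  · exact h1 h

private lemma goodStep_unique {ω : Config3} {u u' v : Fin 3 → ℤ}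
    (h : GoodStep3 ω u v) (h' : GoodStep3 ω u' v) : u = u' := by
  obtain ⟨i, hg, rfl⟩ := h
  obtain ⟨i', hg', he⟩ := h'
  rcases hg.2.2 with hi | ⟨hi, hn⟩ | ⟨hi, hn⟩ <;>
    rcases hg'.2.2 with hi' | ⟨hi', hn'⟩ | ⟨hi', hn'⟩ <;> subst hi <;> subst hi'
  · exact add_right_cancel he
  · -- i = 2, i' = 1
    exfalso
    have e : u' + Pi.single 1 1 - Pi.single 2 1 = u := by rw [← he]; abel
    rw [e] at hn'
    exact hn' ⟨hg.2.1, hg.1⟩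
  · -- i = 2, i' = 0
    exfalso
    have e : u' + Pi.single 0 1 - Pi.single 2 1 = u := by rw [← he]; abel
    rw [e] at hn'
    exact hn' (Or.inl ⟨hg.2.1, hg.1⟩)
  · -- i = 1, i' = 2
    exfalso
    have e : u + Pi.single 1 1 - Pi.single 2 1 = u' := by rw [he]; abel
    rw [e] at hn
    exact hn ⟨hg'.2.1, hg'.1⟩
  · exact add_right_cancel he
  · -- i = 1, i' = 0
    exfalso
    have e : u' + Pi.single 0 1 - Pi.single 1 1 = u := by rw [← he]; abel
    rw [e] at hn'
    exact hn' (Or.inr ⟨hg.2.1, hg.1⟩)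
  · -- i = 0, i' = 2
    exfalso
    have e : u + Pi.single 0 1 - Pi.single 2 1 = u' := by rw [he]; abel
    rw [e] at hn
    exact hn (Or.inl ⟨hg'.2.1, hg'.1⟩)
  · -- i = 0, i' = 1
    exfalso
    have e : u + Pi.single 0 1 - Pi.single 1 1 = u' := by rw [he]; abel
    rw [e] at hn
    exact hn (Or.inr ⟨hg'.2.1, hg'.1⟩)
  · exact add_right_cancel he

private lemma chain_decomp {α : Type*} {R : α → α → Prop} {l : List α} {a b : α}
    (hh : l.head? = some a) (hl : l.getLast? = some b) (hc : l.Chain' R) :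
    (l = [a] ∧ a = b) ∨
      ∃ l' c, l = l' ++ [b] ∧ l'.head? = some a ∧ l'.getLast? = some c ∧
        l'.Chain' R ∧ R c b := by
  have hne : l ≠ [] := by rintro rfl; simp at hh
  have hdecomp := List.dropLast_append_getLast hne
  have hb : l.getLast hne = b := by
    rw [List.getLast?_eq_getLast hne] at hl
    exact Option.some_injective _ hl
  rcases eq_or_ne l.dropLast [] with hd | hd
  · have hl1 : l = [l.getLast hne] := by
      conv_lhs => rw [← hdecomp]
      rw [hd]; simp
    have ha : l.getLast hne = a := by
      rw [hl1] at hh; simpa using hh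
    left
    constructor
    · rw [hl1, ha]
    · rw [← ha, hb]
  · right
    refine ⟨l.dropLast, l.dropLast.getLast hd, ?_, ?_,
      List.getLast?_eq_getLast hd, ?_, ?_⟩
    · rw [← hb, hdecomp]
    · obtain ⟨x, t, hx⟩ := List.exists_cons_of_ne_nil hd
      rw [← hdecomp, hx] at hh
      rw [hx]
      simpa using hh
    · rw [← hdecomp] at hc; unfold List.Chain' at hc; rw [List.isChain_append] at hc
      exact hc.1
    · rw [← hdecomp] at hc; unfold List.Chain' at hc; rw [List.isChain_append] at hc
      have := hc.2.2 (l.dropLast.getLast hd) (List.getLast?_eq_getLast hd)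
        (l.getLast hne) rfl
      rwa [hb] at this

/-- Every occupied vertex of `ℤ³` is reached from the origin by exactly one path of
good edges. -/
theorem stmt_14 (ω : Config3) (v : Fin 3 → ℤ) (h : Occupied3 ω v) :
    ∃! l : List (Fin 3 → ℤ),
      l.head? = some 0 ∧ l.getLast? = some v ∧ l.Chain' (GoodStep3 ω) := by
  suffices H : ∀ n : ℕ, ∀ v : Fin 3 → ℤ, Occupied3 ω v → (S3 v).toNat = n →
      ∃! l : List (Fin 3 → ℤ),
        l.head? = some 0 ∧ l.getLast? = some v ∧ l.Chain' (GoodStep3 ω) by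
    exact H _ v h rfl
  intro n
  induction n using Nat.strong_induction_on with
  | _ n ih =>
    intro v hv hn
    by_cases h0 : v = (0 : Fin 3 → ℤ)
    · subst h0
      refine ⟨[0], ⟨rfl, by simp, List.isChain_singleton _⟩, ?_⟩
      rintro l ⟨lh, ll, lc⟩
      rcases chain_decomp lh ll lc with ⟨rfl, -⟩ | ⟨l', c, rfl, -, -, -, hR⟩
      · rfl
      · exfalso
        obtain ⟨i, hg, he⟩ := hR
        have hcS : 0 ≤ S3 c := occupied_S3_nonneg hg.2.1
        have hzero : S3 (0 : Fin 3 → ℤ) = S3 c + 1 := by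
          rw [he, S3_add_single]
        have hz : S3 (0 : Fin 3 → ℤ) = 0 := rfl
        rw [hz] at hzero
        omega
    · obtain ⟨u, hu⟩ := pred_exists hv h0
      obtain ⟨i, hg, hveq⟩ := id hu
      have hocc : Occupied3 ω u := hg.2.1
      have hS : S3 v = S3 u + 1 := by rw [hveq, S3_add_single]
      have hSu : 0 ≤ S3 u := occupied_S3_nonneg hocc
      have hlt : (S3 u).toNat < n := by omega
      obtain ⟨l₀, ⟨h₀h, h₀l, h₀c⟩, hou⟩ := ih _ hlt u hocc rfl
      refine ⟨l₀ ++ [v], ⟨?_, List.getLast?_concat, ?_⟩, ?_⟩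
      · rw [List.head?_append, h₀h]; rfl
      · unfold List.Chain'; rw [List.isChain_append]
        refine ⟨h₀c, by simp, ?_⟩
        intro x hx y hy
        have hx2 : l₀.getLast? = some x := hx
        rw [h₀l] at hx2
        have hy2 : ([v] : List (Fin 3 → ℤ)).head? = some y := hy
        have hx3 : x = u := (Option.some_injective _ hx2).symm
        have hy3 : y = v := (Option.some_injective _ hy2).symm
        rw [hx3, hy3]
        exact hu
      · rintro l ⟨lh, ll, lc⟩
        rcases chain_decomp lh ll lc with ⟨rfl, h0v⟩ | ⟨l', c, rfl, lh', ll', lc', hR⟩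
        · exact absurd h0v.symm h0
        · have hc : c = u := goodStep_unique hR hu
          subst hc
          rw [hou l' ⟨lh', ll', lc'⟩]
end

section
/- Monotonicity of the state coupling: if s and s' are states (binary sequences of length k beginning with 1) with s ≤ s' coordinatewise, and the children of both are computed from the same configuration of open edges, then each child of s is coordinatewise at most the corresponding child of s'. In particular, by induction, every state s_m produced by the coupling is coordinatewise at most the true occupancy pattern of the corresponding k vertices in the percolation process. -/
/-- The occupancy mark of the `j`-th successor vertex computed from a state `s`
(occupancy of `k` consecutive vertices of equal height) and the configuration `η` of
the edges leaving those vertices (`η i true` = status of the upward edge of vertex `i`,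
`η i false` = status of the rightward edge):  successor `j` is marked if it is reached
via a good edge from a marked vertex, a rightward infection being good only when the
target is not also infected from below. -/
def childMark (k : ℕ) (s : Fin k → Bool) (η : Fin k → Bool → Bool) (j : Fin (k + 1)) :
    Bool :=
  ((if h : (j : ℕ) < k then s ⟨j, h⟩ && η ⟨j, h⟩ true else false) ||
   (if h : 0 < (j : ℕ) then
      (s ⟨(j : ℕ) - 1, by have := j.isLt; omega⟩ &&
        (η ⟨(j : ℕ) - 1, by have := j.isLt; omega⟩ false &&
          ! (if h' : (j : ℕ) < k then s ⟨j, h'⟩ && η ⟨j, h'⟩ true else false)))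
    else false))

/-- The up-child of a state: the interval of `k` successors starting above the
leftmost vertex. -/
def upChild (k : ℕ) (s : Fin k → Bool) (η : Fin k → Bool → Bool) : Fin k → Bool :=
  fun i => childMark k s η i.castSucc

/-- The right-child of a state: the interval of `k` successors starting above-right of
the leftmost vertex. -/
def rightChild (k : ℕ) (s : Fin k → Bool) (η : Fin k → Bool → Bool) : Fin k → Bool :=
  fun i => childMark k s η i.succ

lemma childMark_mono {k : ℕ} (s s' : Fin k → Bool) (η : Fin k → Bool → Bool)
    (hs : ∀ i, s i = true → s' i = true) (j : Fin (k+1))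
    (h : (((if h : (j : ℕ) < k then s ⟨j, h⟩ && η ⟨j, h⟩ true else false) ||
   (if h : 0 < (j : ℕ) then
      (s ⟨(j : ℕ) - 1, by have := j.isLt; omega⟩ &&
        (η ⟨(j : ℕ) - 1, by have := j.isLt; omega⟩ false &&
          ! (if h' : (j : ℕ) < k then s ⟨j, h'⟩ && η ⟨j, h'⟩ true else false)))
    else false))) = true) :
    (((if h : (j : ℕ) < k then s' ⟨j, h⟩ && η ⟨j, h⟩ true else false) ||
   (if h : 0 < (j : ℕ) then
      (s' ⟨(j : ℕ) - 1, by have := j.isLt; omega⟩ &&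
        (η ⟨(j : ℕ) - 1, by have := j.isLt; omega⟩ false &&
          ! (if h' : (j : ℕ) < k then s' ⟨j, h'⟩ && η ⟨j, h'⟩ true else false)))
    else false))) = true := by
  split_ifs at h ⊢ with h1 h2
  · by_cases hA : (s' ⟨j, h1⟩ && η ⟨j, h1⟩ true) = true
    · simp [hA]
    · simp only [Bool.or_eq_true, Bool.and_eq_true, Bool.not_eq_true'] at h ⊢
      rcases h with ⟨h3, h4⟩ | ⟨h3, h4, _⟩
      · exact absurd ((Bool.and_eq_true _ _).mpr ⟨hs _ h3, h4⟩) hA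
      · exact Or.inr ⟨hs _ h3, h4, by simpa [Bool.and_eq_true] using hA⟩
  · simp only [Bool.or_eq_true, Bool.and_eq_true, Bool.or_false] at h ⊢
    exact ⟨hs _ h.1, h.2⟩
  · simp only [Bool.false_or, Bool.and_eq_true, Bool.not_false, Bool.and_true] at h ⊢
    exact ⟨hs _ h.1, h.2⟩
  · simp at h

lemma childMark_mono' {k : ℕ} (s s' : Fin k → Bool) (η : Fin k → Bool → Bool)
    (hs : ∀ i, s i = true → s' i = true) (j : Fin (k+1))
    (h : childMark k s η j = true) : childMark k s' η j = true := by
  unfold childMark at h ⊢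
  exact childMark_mono s s' η hs j h

/-- Monotonicity of the state coupling: if `s ≤ s'` coordinatewise and the children are
computed from the same edge configuration, then each child of `s` is coordinatewise at
most the corresponding child of `s'`.  In particular, by induction, every state `s m`
produced by the coupling is coordinatewise at most the true occupancy pattern `o m`
of the corresponding vertices (which dominates the computed child at each step). -/
theorem stmt_16 (k : ℕ) (hk : 0 < k) :
    (∀ (s s' : Fin k → Bool) (η : Fin k → Bool → Bool),
      s ⟨0, hk⟩ = true → s' ⟨0, hk⟩ = true →
      (∀ i, s i = true → s' i = true) →
      (∀ i, upChild k s η i = true → upChild k s' η i = true) ∧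
      (∀ i, rightChild k s η i = true → rightChild k s' η i = true)) ∧
    (∀ (η : ℕ → Fin k → Bool → Bool) (d : ℕ → Bool) (s o : ℕ → Fin k → Bool),
      (∀ i, s 0 i = true → o 0 i = true) →
      (∀ m, s (m + 1) =
        (if d m then rightChild k (s m) (η m) else upChild k (s m) (η m))) →
      (∀ m i, (if d m then rightChild k (o m) (η m) else upChild k (o m) (η m)) i = true →
        o (m + 1) i = true) →
      ∀ m i, s m i = true → o m i = true) := by
  constructor
  · intro s s' η _ _ hs
    exact ⟨fun i h => childMark_mono' s s' η hs _ h,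
           fun i h => childMark_mono' s s' η hs _ h⟩
  · intro η d s o h0 hs ho m
    induction m with
    | zero => exact h0
    | succ m ih =>
      intro i hi
      apply ho m i
      rw [hs] at hi
      by_cases hd : d m = true
      · simp only [hd, if_true] at hi ⊢
        exact childMark_mono' (s m) (o m) (η m) ih _ hi
      · simp only [hd, if_false] at hi ⊢
        exact childMark_mono' (s m) (o m) (η m) ih _ hi
end
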